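/- arXiv:2604.15164 — 7 statements merged into one kernel-verified Lean document; each statement's English description precedes it below -/
import Mathlib

section
/- Let p > 3 be a prime number and f ≥ 1 an integer. Let n : {0,1,…,f−1} → ℤ be a function with |n(j)| ≤ 2 for all j. If the sum ∑_{j=0}^{f−1} n(j)·p^j is divisible by p^f − 1, then n(j) = 0 for all j. Likewise, if ∑_{j=0}^{f−1} n(j)·p^j is divisible by p^f + 1, then n(j) = 0 for all j. -/
private lemma balanced_aux (p : ℕ) (hp : 2 < p) :
    ∀ f (n : Fin f → ℤ), (∀ j, |n j| ≤ 2) →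
      ∑ j : Fin f, n j * (p : ℤ) ^ (j : ℕ) = 0 → ∀ j, n j = 0 := by
  intro f
  induction f with
  | zero => intro n _ _ j; exact j.elim0
  | succ f ih =>
    intro n hn hsum
    rw [Fin.sum_univ_succ] at hsum
    simp only [Fin.val_zero, pow_zero, mul_one, Fin.val_succ] at hsum
    have hrw : ∑ j : Fin f, n j.succ * (p : ℤ) ^ ((j : ℕ) + 1)
        = (p : ℤ) * ∑ j : Fin f, n j.succ * (p : ℤ) ^ (j : ℕ) := by
      rw [Finset.mul_sum]; congr 1; ext j; ring
    rw [hrw] at hsum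
    have hdvd : (p : ℤ) ∣ n 0 := ⟨-∑ j : Fin f, n j.succ * (p : ℤ) ^ (j : ℕ), by linarith⟩
    have h0 : n 0 = 0 := by
      refine Int.eq_zero_of_abs_lt_dvd hdvd ?_
      have := hn 0
      have : (2 : ℤ) < p := by exact_mod_cast hp
      omega
    have hT : ∑ j : Fin f, n j.succ * (p : ℤ) ^ (j : ℕ) = 0 := by
      have hp0 : (p : ℤ) ≠ 0 := by positivity
      have := mul_eq_zero.mp (by linarith : (p : ℤ) * ∑ j : Fin f, n j.succ * (p : ℤ) ^ (j : ℕ) = 0)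
      tauto
    intro j
    refine Fin.cases h0 (fun i => ?_) j
    exact ih (fun j => n j.succ) (fun j => hn j.succ) hT i

/-- **Uniqueness of balanced base-`p` expansions modulo `p^f ∓ 1`.**
Let `p > 3` be a prime and `f ≥ 1`.  If `n : Fin f → ℤ` has `|n j| ≤ 2` for all `j`
and `∑ j, n j * p ^ j` is divisible by `p ^ f - 1` (resp. by `p ^ f + 1`),
then `n j = 0` for all `j`. -/
theorem balanced_basep_expansion_vanishes
    (p f : ℕ) (hp : Nat.Prime p) (hp3 : 3 < p) (hf : 1 ≤ f)
    (n : Fin f → ℤ) (hn : ∀ j, |n j| ≤ 2) :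
    (((p : ℤ) ^ f - 1 ∣ ∑ j : Fin f, n j * (p : ℤ) ^ (j : ℕ)) → ∀ j, n j = 0) ∧
    (((p : ℤ) ^ f + 1 ∣ ∑ j : Fin f, n j * (p : ℤ) ^ (j : ℕ)) → ∀ j, n j = 0) := by
  set S := ∑ j : Fin f, n j * (p : ℤ) ^ (j : ℕ) with hS
  have hpz : (3 : ℤ) < p := by exact_mod_cast hp3
  -- bound |S|
  have hbound : |S| < (p : ℤ) ^ f - 1 := by
    have h1 : |S| ≤ ∑ j : Fin f, |n j * (p : ℤ) ^ (j : ℕ)| := Finset.abs_sum_le_sum_abs _ _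
    have h2 : ∀ j : Fin f, |n j * (p : ℤ) ^ (j : ℕ)| ≤ 2 * (p : ℤ) ^ (j : ℕ) := by
      intro j
      rw [abs_mul, abs_pow, abs_of_nonneg (by positivity : (0:ℤ) ≤ (p:ℤ))]
      exact mul_le_mul_of_nonneg_right (hn j) (by positivity)
    have h3 : |S| ≤ 2 * ∑ j : Fin f, (p : ℤ) ^ (j : ℕ) := by
      rw [Finset.mul_sum]
      exact le_trans h1 (Finset.sum_le_sum fun j _ => h2 j)
    have hgeom : ((p : ℤ) - 1) * ∑ j ∈ Finset.range f, (p : ℤ) ^ j = (p : ℤ) ^ f - 1 := by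
      rw [mul_comm]; exact geom_sum_mul (p : ℤ) f
    have hsum_eq : ∑ j : Fin f, (p : ℤ) ^ (j : ℕ) = ∑ j ∈ Finset.range f, (p : ℤ) ^ j :=
      Fin.sum_univ_eq_sum_range _ f
    have hpos : (1 : ℤ) ≤ ∑ j ∈ Finset.range f, (p : ℤ) ^ j := by
      calc (1:ℤ) = (p:ℤ)^0 := by ring
      _ ≤ ∑ j ∈ Finset.range f, (p : ℤ) ^ j :=
        Finset.single_le_sum (f := fun j => (p:ℤ)^j) (fun j _ => by positivity)
          (Finset.mem_range.mpr hf)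
    have : 2 * ∑ j ∈ Finset.range f, (p : ℤ) ^ j < (p : ℤ) ^ f - 1 := by
      rw [← hgeom]; nlinarith
    rw [hsum_eq] at h3; linarith
  have key : S = 0 → ∀ j, n j = 0 := balanced_aux p (by omega) f n hn
  constructor
  · intro hdvd
    exact key (Int.eq_zero_of_abs_lt_dvd hdvd hbound)
  · intro hdvd
    refine key (Int.eq_zero_of_abs_lt_dvd hdvd (by linarith))
end

section
/- Let W̃ := ℤ² ⋊ S₂, written as pairs (μ, w) with multiplication (μ,w)(ν,u) = (μ + w·ν, wu), where the nontrivial element s of S₂ acts on ℤ² by swapping coordinates; write t_μ := (μ, 1). For a boolean b define the subset A(b) ⊆ W̃ by A(false) := {t_{(2,1)}, t_{(1,2)}, t_{(1,2)}·(0,s)} and A(true) := {t_{(2,1)}, t_{(1,2)}·(0,s)}. Let f ≥ 1, J := {0,…,f−1}, b : J → Bool, and let Adm := {u : J → W̃ | u(j) ∈ A(b(j)) for all j}. For j ∈ J and ε ∈ {+1,−1} let τ(j,ε) : J → W̃ be the tuple equal to t_{ε·(1,−1)} at j and to the identity elsewhere (multiplication of tuples is componentwise). Then: (1) for every u ∈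 Adm, j ∈ J and ε, the tuple u·τ(j,ε)·τ(j,ε) does NOT lie in Adm; (2) if j ≠ j′, ε, ε′ are arbitrary, and u·τ(j,ε)·τ(j′,ε′) ∈ Adm, then u·τ(j,ε) ∈ Adm and u·τ(j′,ε′) ∈ Adm. -/
/-- The extended affine Weyl group `W̃ = ℤ² ⋊ S₂`, written as pairs `(μ, w)`.
Here `S₂` is modelled by `Bool` (with `true` the nontrivial element `s`,
acting on `ℤ²` by swapping the two coordinates). -/
def TildeW : Type := (ℤ × ℤ) × Bool

namespace TildeW

/-- Multiplication `(μ, w)(ν, u) = (μ + w·ν, wu)`, where `w·ν` swaps the coordinates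
of `ν` exactly when `w = s`. -/
instance : Mul TildeW :=
  ⟨fun x y => (x.1 + (if x.2 then y.1.swap else y.1), xor x.2 y.2)⟩

/-- The translation `t_μ = (μ, 1)`. -/
def t (μ : ℤ × ℤ) : TildeW := (μ, false)

/-- The element `(0, s)`, `s` the nontrivial element of `S₂`. -/
def s : TildeW := ((0, 0), true)

/-- The subsets `A(b) ⊆ W̃`:
`A(false) = {t_(2,1), t_(1,2), t_(1,2)·(0,s)}` and `A(true) = {t_(2,1), t_(1,2)·(0,s)}`. -/
def A : Bool → Set TildeW
  | false => {t (2, 1), t (1, 2), t (1, 2) * s}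
  | true => {t (2, 1), t (1, 2) * s}

/-- The admissible set `Adm` of tuples. -/
def Adm (f : ℕ) (b : Fin f → Bool) : Set (Fin f → TildeW) :=
  {u | ∀ j, u j ∈ A (b j)}

/-- The tuple `τ(j, ε)`, equal to `t_{ε·(1,-1)}` at the component `j` and to the
identity elsewhere. -/
def τ {f : ℕ} (j : Fin f) (ε : ℤ) : Fin f → TildeW :=
  fun i => if i = j then t (ε, -ε) else t (0, 0)

end TildeW

namespace TildeW

instance : DecidableEq TildeW :=
  inferInstanceAs (DecidableEq ((ℤ × ℤ) × Bool))

lemma mul_def (x y : TildeW) :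
    x * y = (x.1 + (if x.2 then y.1.swap else y.1), xor x.2 y.2) := rfl

lemma mul_t_zero (x : TildeW) : x * t 0 = x := by
  rw [mul_def]
  obtain ⟨⟨a, c⟩, w⟩ := x
  simp [mul_def, t]
  rfl

lemma key (c : Bool) (ε : ℤ) (hε : ε = 1 ∨ ε = -1) (x : TildeW) (hx : x ∈ A c) :
    x * t (ε, -ε) * t (ε, -ε) ∉ A c := by
  rcases hε with rfl | rfl <;> cases c <;>
    simp only [A, Set.mem_insert_iff, Set.mem_singleton_iff] at hx ⊢ <;>
    rcases hx with rfl | rfl | rfl <;>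
    decide

end TildeW

open TildeW in
/-- **The hypercube lemma.**  (1) For `u ∈ Adm`, the tuple `u·τ(j,ε)·τ(j,ε)` never lies
in `Adm`.  (2) For `u ∈ Adm` and `j ≠ j'`, if `u·τ(j,ε)·τ(j',ε')` lies in `Adm` then so do
`u·τ(j,ε)` and `u·τ(j',ε')`. -/
theorem hypercube (f : ℕ) (hf : 1 ≤ f) (b : Fin f → Bool) :
    (∀ u ∈ Adm f b, ∀ (j : Fin f) (ε : ℤ), (ε = 1 ∨ ε = -1) →
        u * τ j ε * τ j ε ∉ Adm f b) ∧
    (∀ u ∈ Adm f b, ∀ (j j' : Fin f) (ε ε' : ℤ), j ≠ j' →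
        (ε = 1 ∨ ε = -1) → (ε' = 1 ∨ ε' = -1) →
        u * τ j ε * τ j' ε' ∈ Adm f b →
        u * τ j ε ∈ Adm f b ∧ u * τ j' ε' ∈ Adm f b) := by
  constructor
  · rintro u hu j ε hε hmem
    exact key (b j) ε hε (u j) (hu j) (by simpa [τ] using hmem j)
  · rintro u hu j j' ε ε' hjj' hε hε' hmem
    constructor
    · intro i
      rcases eq_or_ne i j with rfl | hij
      · have := hmem i
        simpa [τ, hjj', Prod.mk_zero_zero, mul_t_zero] using this
      · simpa [τ, hij, Prod.mk_zero_zero, mul_t_zero] using hu i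
    · intro i
      rcases eq_or_ne i j' with rfl | hij'
      · have := hmem i
        simpa [τ, Ne.symm hjj', Prod.mk_zero_zero, mul_t_zero] using this
      · simpa [τ, hij', Prod.mk_zero_zero, mul_t_zero] using hu i
end

section
/- Let S be a commutative local ring with maximal ideal 𝔪_S, and let p ∈ S be an element (the image of a uniformizer of a discrete valuation ring O over which S is an algebra). Let K ⊆ S be an ideal and let I, J ⊆ K be ideals of S. Call an ideal a ⊆ S p-saturated if S/a has no p-torsion, i.e. for all x ∈ S and n ≥ 0, pⁿx ∈ a implies x ∈ a. Assume I and J are p-saturated and that p ∈ I + J. Let x ∈ K and assume x ∈ (I + p·𝔪_S) ∩ (J + p·𝔪_S). Then there exists y ∈ I ∩ J such that x − y ∈ 𝔪_S·K; equivalently, the class of x in K/𝔪_S K lies in the image of I ∩ J → K/𝔪_S K. -/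
/-- An ideal `a` of `S` is `p`-saturated if `S/a` has no `p`-torsion, i.e.
`pⁿ x ∈ a` implies `x ∈ a`. -/
def Ideal.PSaturated {S : Type*} [CommRing S] (p : S) (a : Ideal S) : Prop :=
  ∀ (x : S) (n : ℕ), p ^ n * x ∈ a → x ∈ a

/-- **Intersection distortion, part (1).**  Let `S` be a commutative local ring with
maximal ideal `𝔪`, `p ∈ S`, `K` an ideal and `I, J ⊆ K` be `p`-saturated ideals with
`p ∈ I + J`.  If `x ∈ K` lies in `(I + p𝔪) ∩ (J + p𝔪)`, then there is `y ∈ I ∩ J`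
with `x - y ∈ 𝔪·K`. -/
theorem intersection_distortion_one
    {S : Type*} [CommRing S] [IsLocalRing S] (p : S)
    (K I J : Ideal S) (hIK : I ≤ K) (hJK : J ≤ K)
    (hIsat : Ideal.PSaturated p I) (hJsat : Ideal.PSaturated p J)
    (hp : p ∈ I + J)
    (x : S) (hxK : x ∈ K)
    (hxI : x ∈ I + Ideal.span {p} * IsLocalRing.maximalIdeal S)
    (hxJ : x ∈ J + Ideal.span {p} * IsLocalRing.maximalIdeal S) :
    ∃ y ∈ I ⊓ J, x - y ∈ IsLocalRing.maximalIdeal S * K := by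
  rw [Submodule.add_eq_sup, Submodule.mem_sup] at hxI hxJ hp
  obtain ⟨i, hi, t₁, ht₁, hx₁⟩ := hxI
  obtain ⟨j, hj, t₂, ht₂, hx₂⟩ := hxJ
  obtain ⟨a, ha, b, hb, hab⟩ := hp
  rw [Ideal.mem_span_singleton_mul] at ht₁ ht₂
  obtain ⟨m₁, hm₁, rfl⟩ := ht₁
  obtain ⟨m₂, hm₂, rfl⟩ := ht₂
  refine ⟨x - (a * m₂ + b * m₁), ⟨?_, ?_⟩, ?_⟩
  · have : x - (a * m₂ + b * m₁) = i + a * (m₁ - m₂) := by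
      rw [← hx₁, ← hab]; ring
    rw [this]
    exact I.add_mem hi (I.mul_mem_right _ ha)
  · have : x - (a * m₂ + b * m₁) = j + b * (m₂ - m₁) := by
      rw [← hx₂, ← hab]; ring
    rw [this]
    exact J.add_mem hj (J.mul_mem_right _ hb)
  · have : x - (x - (a * m₂ + b * m₁)) = m₂ * a + m₁ * b := by ring
    rw [this]
    exact Ideal.add_mem _ (Ideal.mul_mem_mul hm₂ (hIK ha))
      (Ideal.mul_mem_mul hm₁ (hJK hb))
end

section
/- Let S be a commutative ring and p ∈ S an element. Let I₁, I₂ be ideals of S and let x, y, α, β, γ, δ ∈ S. Assume x + pα ∈ I₁, y + pβ ∈ I₁, x + pγ ∈ I₂ and y + pδ ∈ I₂. Then (δ − β)·x + (α − γ)·y ∈ (I₁ ∩ I₂) + pS. -/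
/-- **Linear distortion.**  Let `S` be a commutative ring, `p ∈ S`, and `I₁, I₂` ideals.
If `x + pα, y + pβ ∈ I₁` and `x + pγ, y + pδ ∈ I₂`, then
`(δ - β)·x + (α - γ)·y ∈ (I₁ ∩ I₂) + pS`. -/
theorem linear_distortion
    {S : Type*} [CommRing S] (p : S) (I₁ I₂ : Ideal S)
    (x y α β γ δ : S)
    (h₁ : x + p * α ∈ I₁) (h₂ : y + p * β ∈ I₁)
    (h₃ : x + p * γ ∈ I₂) (h₄ : y + p * δ ∈ I₂) :
    (δ - β) * x + (α - γ) * y ∈ (I₁ ⊓ I₂) + Ideal.span {p} := by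
  have hz : (δ - β) * x + (α - γ) * y + p * (α * δ - β * γ) ∈ I₁ ⊓ I₂ := by
    constructor
    · have : (δ - β) * x + (α - γ) * y + p * (α * δ - β * γ)
        = (δ - β) * (x + p * α) + (α - γ) * (y + p * β) := by ring
      rw [this]
      exact add_mem (I₁.mul_mem_left _ h₁) (I₁.mul_mem_left _ h₂)
    · have : (δ - β) * x + (α - γ) * y + p * (α * δ - β * γ)
        = (δ - β) * (x + p * γ) + (α - γ) * (y + p * δ) := by ring
      rw [this]
      exact add_mem (I₂.mul_mem_left _ h₃) (I₂.mul_mem_left _ h₄)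
  have : (δ - β) * x + (α - γ) * y
      = ((δ - β) * x + (α - γ) * y + p * (α * δ - β * γ)) + p * (-(α * δ - β * γ)) := by
    ring
  rw [this]
  exact Submodule.add_mem_sup hz (Ideal.mem_span_singleton.mpr ⟨_, rfl⟩)
end

section
/- Let O be the ring of integers of a finite unramified extension of ℚ_p, with uniformizer p. Let S := O[α₀, α₁, α₂, β₀, β₁, γ₀, γ₁, γ₂, δ₀, δ₁] be a polynomial ring, and define the ideal K₁ := (α₀ + pα₁ + p²α₂ + p³, β₀ + pβ₁, γ₀ + pγ₁ + p²γ₂, δ₀ + pδ₁ + p², β₁, α₂ + p, δ₁ + p, γ₁ + pγ₂, α₁). Let κ ∈ O with κ − 1, κ − 2 and κ − 3 units of O, and define K₂ := (α₀ + pα₁ + p²α₂ + p³, α₁ + 2pα₂ + 3p², γ₀ + pγ₁ + p²γ₂, γ₁ + 2pγ₂, γ₂β₁ − 2p(κ−1)⁻¹(κ−2)⁻¹, δ₁ + 2(κ−1)⁻¹p, α₂ + 2(1 − (κ−2)⁻¹)p, κβ₀ − 2pβ₁, κδ₀ − 2(κ−1)⁻¹p²). Then K₁ + K₂ = K₁ +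 pS. -/
/-!  Proposition 3.9 ('ideals for arm cyclicity'), case `ũ_j = t_{(2,1)_j}`,
`w̃_j = t_{(1,2)_j}`, in explicit coordinates.

`O` is the ring of integers of a finite unramified extension of `ℚ_p`: we formalize this
as a discrete valuation ring in which the rational prime `p` is a uniformizer.
`S = O[α₀, α₁, α₂, β₀, β₁, γ₀, γ₁, γ₂, δ₀, δ₁]` is realized as
`MvPolynomial (Fin 10) O`. -/

noncomputable section

section ArmCyclicity

variable (O : Type*) [CommRing O] (p : ℕ) (κ : O)

local notation "SS" => MvPolynomial (Fin 10) O
local notation "pp" => ((p : ℕ) : SS)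
local notation "CC" => (MvPolynomial.C : O → SS)
local notation "α₀" => (MvPolynomial.X 0 : SS)
local notation "α₁" => (MvPolynomial.X 1 : SS)
local notation "α₂" => (MvPolynomial.X 2 : SS)
local notation "β₀" => (MvPolynomial.X 3 : SS)
local notation "β₁" => (MvPolynomial.X 4 : SS)
local notation "γ₀" => (MvPolynomial.X 5 : SS)
local notation "γ₁" => (MvPolynomial.X 6 : SS)
local notation "γ₂" => (MvPolynomial.X 7 : SS)
local notation "δ₀" => (MvPolynomial.X 8 : SS)
local notation "δ₁" => (MvPolynomial.X 9 : SS)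

/-- **Proposition 3.9, case `ũ_j = t_{(2,1)_j}`, `w̃_j = t_{(1,2)_j}`:**
`K₁ + K₂ = K₁ + pS`. -/
theorem arm_cyclicity_t21_t12
    (hp : Nat.Prime p)
    [IsDomain O] [IsDiscreteValuationRing O] (hunif : Irreducible (p : O))
    (hκ1 : IsUnit (κ - 1)) (hκ2 : IsUnit (κ - 2)) (hκ3 : IsUnit (κ - 3))
    (K₁ K₂ : Ideal SS)
    (hK₁ : K₁ = Ideal.span
      {α₀ + pp * α₁ + pp ^ 2 * α₂ + pp ^ 3, β₀ + pp * β₁,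
       γ₀ + pp * γ₁ + pp ^ 2 * γ₂, δ₀ + pp * δ₁ + pp ^ 2,
       β₁, α₂ + pp, δ₁ + pp, γ₁ + pp * γ₂, α₁})
    (hK₂ : K₂ = Ideal.span
      {α₀ + pp * α₁ + pp ^ 2 * α₂ + pp ^ 3, α₁ + 2 * pp * α₂ + 3 * pp ^ 2,
       γ₀ + pp * γ₁ + pp ^ 2 * γ₂, γ₁ + 2 * pp * γ₂,
       γ₂ * β₁ - 2 * pp * CC (Ring.inverse (κ - 1) * Ring.inverse (κ - 2)),
       δ₁ + 2 * CC (Ring.inverse (κ - 1)) * pp,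
       α₂ + 2 * CC (1 - Ring.inverse (κ - 2)) * pp,
       CC κ * β₀ - 2 * pp * β₁,
       CC κ * δ₀ - 2 * CC (Ring.inverse (κ - 1)) * pp ^ 2}) :
    K₁ ⊔ K₂ = K₁ ⊔ Ideal.span {pp} := by

  subst hK₁ hK₂
  -- the unit `v = 2(κ-1)⁻¹ - 1 = (3-κ)(κ-1)⁻¹`
  set v : O := 2 * Ring.inverse (κ - 1) - 1 with hvdef
  have hmul : (κ - 1) * Ring.inverse (κ - 1) = 1 := Ring.mul_inverse_cancel _ hκ1
  have hveq : v = (3 - κ) * Ring.inverse (κ - 1) := by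
    rw [hvdef]; linear_combination hmul
  have hv : IsUnit v := by
    rw [hveq]
    exact (by simpa using hκ3.neg : IsUnit (3 - κ)).mul
      ((isUnit_ringInverse).2 hκ1)
  apply le_antisymm
  · refine sup_le le_sup_left ?_
    rw [Ideal.span_le]
    intro x hx
    simp only [Set.mem_insert_iff, Set.mem_singleton_iff] at hx
    have hf : ∀ y ∈ ({α₀ + pp * α₁ + pp ^ 2 * α₂ + pp ^ 3, β₀ + pp * β₁,
       γ₀ + pp * γ₁ + pp ^ 2 * γ₂, δ₀ + pp * δ₁ + pp ^ 2,
       β₁, α₂ + pp, δ₁ + pp, γ₁ + pp * γ₂, α₁} : Set SS),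
        y ∈ (Ideal.span ({α₀ + pp * α₁ + pp ^ 2 * α₂ + pp ^ 3, β₀ + pp * β₁,
       γ₀ + pp * γ₁ + pp ^ 2 * γ₂, δ₀ + pp * δ₁ + pp ^ 2,
       β₁, α₂ + pp, δ₁ + pp, γ₁ + pp * γ₂, α₁} : Set SS) ⊔ Ideal.span {pp} : Ideal SS) :=
      fun y hy => Ideal.mem_sup_left (Ideal.subset_span hy)
    have h1 := hf (α₀ + pp * α₁ + pp ^ 2 * α₂ + pp ^ 3) (by simp)
    have h2 := hf (β₀ + pp * β₁) (by simp)
    have h3 := hf (γ₀ + pp * γ₁ + pp ^ 2 * γ₂) (by simp)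
    have h4 := hf (δ₀ + pp * δ₁ + pp ^ 2) (by simp)
    have h5 := hf β₁ (by simp)
    have h6 := hf (α₂ + pp) (by simp)
    have h7 := hf (δ₁ + pp) (by simp)
    have h8 := hf (γ₁ + pp * γ₂) (by simp)
    have h9 := hf α₁ (by simp)
    have hP : pp ∈ (Ideal.span ({α₀ + pp * α₁ + pp ^ 2 * α₂ + pp ^ 3, β₀ + pp * β₁,
       γ₀ + pp * γ₁ + pp ^ 2 * γ₂, δ₀ + pp * δ₁ + pp ^ 2,
       β₁, α₂ + pp, δ₁ + pp, γ₁ + pp * γ₂, α₁} : Set SS) ⊔ Ideal.span {pp} : Ideal SS) :=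
      Ideal.mem_sup_right (Ideal.subset_span rfl)
    rcases hx with rfl | rfl | rfl | rfl | rfl | rfl | rfl | rfl | rfl
    · exact h1
    · have : α₁ + 2 * pp * α₂ + 3 * pp ^ 2
          = α₁ + (2 * pp) * (α₂ + pp) + pp * pp := by ring
      rw [this]
      exact add_mem (add_mem h9 (Ideal.mul_mem_left _ _ h6)) (Ideal.mul_mem_left _ _ hP)
    · exact h3
    · have : γ₁ + 2 * pp * γ₂ = (γ₁ + pp * γ₂) + γ₂ * pp := by ring
      rw [this]
      exact add_mem h8 (Ideal.mul_mem_left _ _ hP)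
    · have : γ₂ * β₁ - 2 * pp * CC (Ring.inverse (κ - 1) * Ring.inverse (κ - 2))
          = γ₂ * β₁ + (-(2 * CC (Ring.inverse (κ - 1) * Ring.inverse (κ - 2)))) * pp := by
        ring
      rw [this]
      exact add_mem (Ideal.mul_mem_left _ _ h5) (Ideal.mul_mem_left _ _ hP)
    · have : δ₁ + 2 * CC (Ring.inverse (κ - 1)) * pp
          = (δ₁ + pp) + (2 * CC (Ring.inverse (κ - 1)) - 1) * pp := by ring
      rw [this]
      exact add_mem h7 (Ideal.mul_mem_left _ _ hP)
    · have : α₂ + 2 * CC (1 - Ring.inverse (κ - 2)) * pp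
          = (α₂ + pp) + (2 * CC (1 - Ring.inverse (κ - 2)) - 1) * pp := by ring
      rw [this]
      exact add_mem h6 (Ideal.mul_mem_left _ _ hP)
    · have : CC κ * β₀ - 2 * pp * β₁
          = CC κ * (β₀ + pp * β₁) + (-(CC κ * pp) - 2 * pp) * β₁ := by ring
      rw [this]
      exact add_mem (Ideal.mul_mem_left _ _ h2) (Ideal.mul_mem_left _ _ h5)
    · have : CC κ * δ₀ - 2 * CC (Ring.inverse (κ - 1)) * pp ^ 2
          = CC κ * (δ₀ + pp * δ₁ + pp ^ 2) + (-(CC κ) * pp) * (δ₁ + pp)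
            + (-(2 * CC (Ring.inverse (κ - 1)))) * pp * pp := by ring
      rw [this]
      exact add_mem (add_mem (Ideal.mul_mem_left _ _ h4) (Ideal.mul_mem_left _ _ h7))
        (Ideal.mul_mem_left _ _ hP)
  · refine sup_le le_sup_left ?_
    rw [Ideal.span_le, Set.singleton_subset_iff]
    have hg6 : δ₁ + 2 * CC (Ring.inverse (κ - 1)) * pp
        ∈ (Ideal.span ({α₀ + pp * α₁ + pp ^ 2 * α₂ + pp ^ 3, β₀ + pp * β₁,
       γ₀ + pp * γ₁ + pp ^ 2 * γ₂, δ₀ + pp * δ₁ + pp ^ 2,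
       β₁, α₂ + pp, δ₁ + pp, γ₁ + pp * γ₂, α₁} : Set SS) ⊔ Ideal.span
      {α₀ + pp * α₁ + pp ^ 2 * α₂ + pp ^ 3, α₁ + 2 * pp * α₂ + 3 * pp ^ 2,
       γ₀ + pp * γ₁ + pp ^ 2 * γ₂, γ₁ + 2 * pp * γ₂,
       γ₂ * β₁ - 2 * pp * CC (Ring.inverse (κ - 1) * Ring.inverse (κ - 2)),
       δ₁ + 2 * CC (Ring.inverse (κ - 1)) * pp,
       α₂ + 2 * CC (1 - Ring.inverse (κ - 2)) * pp,
       CC κ * β₀ - 2 * pp * β₁,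
       CC κ * δ₀ - 2 * CC (Ring.inverse (κ - 1)) * pp ^ 2} : Ideal SS) :=
      Ideal.mem_sup_right (Ideal.subset_span (by simp))
    have hf7 : δ₁ + pp ∈ (Ideal.span ({α₀ + pp * α₁ + pp ^ 2 * α₂ + pp ^ 3, β₀ + pp * β₁,
       γ₀ + pp * γ₁ + pp ^ 2 * γ₂, δ₀ + pp * δ₁ + pp ^ 2,
       β₁, α₂ + pp, δ₁ + pp, γ₁ + pp * γ₂, α₁} : Set SS) ⊔ Ideal.span
      {α₀ + pp * α₁ + pp ^ 2 * α₂ + pp ^ 3, α₁ + 2 * pp * α₂ + 3 * pp ^ 2,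
       γ₀ + pp * γ₁ + pp ^ 2 * γ₂, γ₁ + 2 * pp * γ₂,
       γ₂ * β₁ - 2 * pp * CC (Ring.inverse (κ - 1) * Ring.inverse (κ - 2)),
       δ₁ + 2 * CC (Ring.inverse (κ - 1)) * pp,
       α₂ + 2 * CC (1 - Ring.inverse (κ - 2)) * pp,
       CC κ * β₀ - 2 * pp * β₁,
       CC κ * δ₀ - 2 * CC (Ring.inverse (κ - 1)) * pp ^ 2} : Ideal SS) :=
      Ideal.mem_sup_left (Ideal.subset_span (by simp))
    have key : (δ₁ + 2 * CC (Ring.inverse (κ - 1)) * pp) - (δ₁ + pp) = CC v * pp := by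
      rw [hvdef, map_sub, map_mul, map_one, map_ofNat]
      ring
    have hpp : pp = CC (Ring.inverse v) *
        ((δ₁ + 2 * CC (Ring.inverse (κ - 1)) * pp) - (δ₁ + pp)) := by
      rw [key, ← mul_assoc, ← map_mul, Ring.inverse_mul_cancel _ hv, map_one, one_mul]
    have hmem := Ideal.mul_mem_left _ (CC (Ring.inverse v)) (sub_mem hg6 hf7)
    rwa [← hpp] at hmem


end ArmCyclicity
end
end

section
/- Let O be the ring of integers of a finite unramified extension of ℚ_p, with uniformizer p. Let S := O[α₀, α₁, α₂, β₀, β₁, γ₀, γ₁, γ₂, δ₀, δ₁] be a polynomial ring, and define the ideal K₁ := (α₀ + pα₁ + p²α₂ + p³, β₀ + pβ₁, γ₀ + pγ₁ + p²γ₂, δ₀ + pδ₁ + p², β₁, α₂ + p, δ₁ + p, γ₁ + pγ₂, α₁). Let κ ∈ O be arbitrary and define K₂ := (β₁, β₀, δ₁ + 2p, δ₀ − p², α₂, α₁, α₀, (κ−2)γ₁ + 2pγ₂, (κ−1)γ₀ + pγ₁). Then K₁ + K₂ = K₁ + pS. -/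
/-!  Proposition 3.9 ('ideals for arm cyclicity'), case `ũ_j = t_{(2,1)_j}`,
`w̃_j = t_{(3,0)_j}`, in explicit coordinates.

`O` is the ring of integers of a finite unramified extension of `ℚ_p`: we formalize this
as a discrete valuation ring in which the rational prime `p` is a uniformizer.
`S = O[α₀, α₁, α₂, β₀, β₁, γ₀, γ₁, γ₂, δ₀, δ₁]` is realized as
`MvPolynomial (Fin 10) O`. -/

noncomputable section

section ArmCyclicity

variable (O : Type*) [CommRing O] (p : ℕ) (κ : O)

local notation "SS" => MvPolynomial (Fin 10) O
local notation "pp" => ((p : ℕ) : SS)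
local notation "CC" => (MvPolynomial.C : O → SS)
local notation "α₀" => (MvPolynomial.X 0 : SS)
local notation "α₁" => (MvPolynomial.X 1 : SS)
local notation "α₂" => (MvPolynomial.X 2 : SS)
local notation "β₀" => (MvPolynomial.X 3 : SS)
local notation "β₁" => (MvPolynomial.X 4 : SS)
local notation "γ₀" => (MvPolynomial.X 5 : SS)
local notation "γ₁" => (MvPolynomial.X 6 : SS)
local notation "γ₂" => (MvPolynomial.X 7 : SS)
local notation "δ₀" => (MvPolynomial.X 8 : SS)
local notation "δ₁" => (MvPolynomial.X 9 : SS)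

private lemma mem_of_eq_aux {R : Type*} [CommRing R] {I : Ideal R} {x y : R}
    (h : x = y) (hy : y ∈ I) : x ∈ I := by rw [h]; exact hy

/-- **Proposition 3.9, case `ũ_j = t_{(2,1)_j}`, `w̃_j = t_{(3,0)_j}`:**
`K₁ + K₂ = K₁ + pS`. -/
theorem arm_cyclicity_t21_t30
    (hp : Nat.Prime p)
    [IsDomain O] [IsDiscreteValuationRing O] (hunif : Irreducible (p : O))
    (K₁ K₂ : Ideal SS)
    (hK₁ : K₁ = Ideal.span
      {α₀ + pp * α₁ + pp ^ 2 * α₂ + pp ^ 3, β₀ + pp * β₁,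
       γ₀ + pp * γ₁ + pp ^ 2 * γ₂, δ₀ + pp * δ₁ + pp ^ 2,
       β₁, α₂ + pp, δ₁ + pp, γ₁ + pp * γ₂, α₁})
    (hK₂ : K₂ = Ideal.span
      {β₁, β₀, δ₁ + 2 * pp, δ₀ - pp ^ 2, α₂, α₁, α₀,
       CC (κ - 2) * γ₁ + 2 * pp * γ₂,
       CC (κ - 1) * γ₀ + pp * γ₁}) :
    K₁ ⊔ K₂ = K₁ ⊔ Ideal.span {pp} := by
  subst hK₁ hK₂
  apply le_antisymm
  · refine sup_le le_sup_left ?_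
    rw [Ideal.span_le]
    -- handy memberships in the RHS
    have hpm : pp ∈ (Ideal.span
        {α₀ + pp * α₁ + pp ^ 2 * α₂ + pp ^ 3, β₀ + pp * β₁,
         γ₀ + pp * γ₁ + pp ^ 2 * γ₂, δ₀ + pp * δ₁ + pp ^ 2,
         β₁, α₂ + pp, δ₁ + pp, γ₁ + pp * γ₂, α₁} ⊔ Ideal.span {pp} : Ideal SS) :=
      Ideal.mem_sup_right (Ideal.subset_span rfl)
    have hg : ∀ x ∈ ({α₀ + pp * α₁ + pp ^ 2 * α₂ + pp ^ 3, β₀ + pp * β₁,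
         γ₀ + pp * γ₁ + pp ^ 2 * γ₂, δ₀ + pp * δ₁ + pp ^ 2,
         β₁, α₂ + pp, δ₁ + pp, γ₁ + pp * γ₂, α₁} : Set SS),
        x ∈ (Ideal.span
        {α₀ + pp * α₁ + pp ^ 2 * α₂ + pp ^ 3, β₀ + pp * β₁,
         γ₀ + pp * γ₁ + pp ^ 2 * γ₂, δ₀ + pp * δ₁ + pp ^ 2,
         β₁, α₂ + pp, δ₁ + pp, γ₁ + pp * γ₂, α₁} ⊔ Ideal.span {pp} : Ideal SS) :=
      fun x hx => Ideal.mem_sup_left (Ideal.subset_span hx)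
    have h1 := hg (α₀ + pp * α₁ + pp ^ 2 * α₂ + pp ^ 3) (by simp)
    have h2 := hg (β₀ + pp * β₁) (by simp)
    have h3 := hg (γ₀ + pp * γ₁ + pp ^ 2 * γ₂) (by simp)
    have h4 := hg (δ₀ + pp * δ₁ + pp ^ 2) (by simp)
    have h5 := hg β₁ (by simp)
    have h6 := hg (α₂ + pp) (by simp)
    have h7 := hg (δ₁ + pp) (by simp)
    have h8 := hg (γ₁ + pp * γ₂) (by simp)
    have h9 := hg α₁ (by simp)
    rintro x hx
    simp only [Set.mem_insert_iff, Set.mem_singleton_iff] at hx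
    rcases hx with rfl | rfl | rfl | rfl | rfl | rfl | rfl | rfl | rfl
    · exact h5
    · have e : β₀ = (β₀ + pp * β₁) - pp * β₁ := by ring
      exact mem_of_eq_aux e <| sub_mem h2 (Ideal.mul_mem_left _ _ h5)
    · have e : δ₁ + 2 * pp = (δ₁ + pp) + pp := by ring
      exact mem_of_eq_aux e <| add_mem h7 hpm
    · have e : δ₀ - pp ^ 2 = (δ₀ + pp * δ₁ + pp ^ 2) - pp * (δ₁ + pp) - pp * pp := by
        ring
      exact mem_of_eq_aux e <|
        sub_mem (sub_mem h4 (Ideal.mul_mem_left _ _ h7)) (Ideal.mul_mem_left _ _ hpm)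
    · have e : α₂ = (α₂ + pp) - pp := by ring
      exact mem_of_eq_aux e <| sub_mem h6 hpm
    · exact h9
    · have e : α₀ = (α₀ + pp * α₁ + pp ^ 2 * α₂ + pp ^ 3)
          - pp * α₁ - pp ^ 2 * (α₂ + pp) := by ring
      exact mem_of_eq_aux e <|
        sub_mem (sub_mem h1 (Ideal.mul_mem_left _ _ h9)) (Ideal.mul_mem_left _ _ h6)
    · have e : CC (κ - 2) * γ₁ + 2 * pp * γ₂
          = CC (κ - 2) * (γ₁ + pp * γ₂) + ((2 - CC (κ - 2)) * γ₂) * pp := by ring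
      exact mem_of_eq_aux e <|
        add_mem (Ideal.mul_mem_left _ _ h8) (Ideal.mul_mem_left _ _ hpm)
    · have e : CC (κ - 1) * γ₀ + pp * γ₁
          = CC (κ - 1) * (γ₀ + pp * γ₁ + pp ^ 2 * γ₂)
            + ((1 - CC (κ - 1)) * γ₁ - CC (κ - 1) * pp * γ₂) * pp := by ring
      exact mem_of_eq_aux e <|
        add_mem (Ideal.mul_mem_left _ _ h3) (Ideal.mul_mem_left _ _ hpm)
  · refine sup_le le_sup_left ?_
    rw [Ideal.span_le, Set.singleton_subset_iff]
    have h7 : (δ₁ + pp : SS) ∈ Ideal.span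
        {α₀ + pp * α₁ + pp ^ 2 * α₂ + pp ^ 3, β₀ + pp * β₁,
         γ₀ + pp * γ₁ + pp ^ 2 * γ₂, δ₀ + pp * δ₁ + pp ^ 2,
         β₁, α₂ + pp, δ₁ + pp, γ₁ + pp * γ₂, α₁} := Ideal.subset_span (by simp)
    have h3' : (δ₁ + 2 * pp : SS) ∈ Ideal.span
        {β₁, β₀, δ₁ + 2 * pp, δ₀ - pp ^ 2, α₂, α₁, α₀,
         CC (κ - 2) * γ₁ + 2 * pp * γ₂,
         CC (κ - 1) * γ₀ + pp * γ₁} := Ideal.subset_span (by simp)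
    have hm := sub_mem (Ideal.mem_sup_right h3') (Ideal.mem_sup_left h7)
    exact mem_of_eq_aux (by ring) hm

end ArmCyclicity
end
end

section
/- Let O be the ring of integers of a finite unramified extension of ℚ_p, with uniformizer p. Let S := O[α₀, α₁, β₀, β₁, β₂, γ₀, γ₁, γ₂, δ₀, δ₁] be a polynomial ring, and define the ideal K₁ := (α₀, α₁ + p, β₀, β₁ + pβ₂, γ₀, γ₁ + pγ₂, δ₀, δ₁ + p, β₂γ₂ + p). Let κ ∈ O be arbitrary and define K₂ := (α₀ − p², α₁ + 2p, γ₀ − p²γ₂, γ₁ + 2pγ₂, γ₂β₂ − δ₁ + p, (κ−1)β₁ + 2pβ₂, pβ₁ + κβ₀, (κ−2)δ₁ + 2p, (κ−1)δ₀ + pδ₁). Then K₁ + K₂ = K₁ + pS. -/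
/-!  Proposition 3.9 ('ideals for arm cyclicity'), case `ũ_j = t_{(1,2)_j}s`,
`w̃_j = t_{(0,3)_j}s`, in explicit coordinates.

`O` is the ring of integers of a finite unramified extension of `ℚ_p`: we formalize this
as a discrete valuation ring in which the rational prime `p` is a uniformizer.
`S = O[α₀, α₁, β₀, β₁, β₂, γ₀, γ₁, γ₂, δ₀, δ₁]` is realized as
`MvPolynomial (Fin 10) O`. -/

noncomputable section

section ArmCyclicity

variable (O : Type*) [CommRing O] (p : ℕ) (κ : O)

local notation "SS" => MvPolynomial (Fin 10) O
local notation "pp" => ((p : ℕ) : SS)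
local notation "CC" => (MvPolynomial.C : O → SS)
local notation "α₀" => (MvPolynomial.X 0 : SS)
local notation "α₁" => (MvPolynomial.X 1 : SS)
local notation "β₀" => (MvPolynomial.X 2 : SS)
local notation "β₁" => (MvPolynomial.X 3 : SS)
local notation "β₂" => (MvPolynomial.X 4 : SS)
local notation "γ₀" => (MvPolynomial.X 5 : SS)
local notation "γ₁" => (MvPolynomial.X 6 : SS)
local notation "γ₂" => (MvPolynomial.X 7 : SS)
local notation "δ₀" => (MvPolynomial.X 8 : SS)
local notation "δ₁" => (MvPolynomial.X 9 : SS)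

/-- **Proposition 3.9, case `ũ_j = t_{(1,2)_j}s`, `w̃_j = t_{(0,3)_j}s`:**
`K₁ + K₂ = K₁ + pS`. -/
theorem arm_cyclicity_t12s_t03s
    (hp : Nat.Prime p)
    [IsDomain O] [IsDiscreteValuationRing O] (hunif : Irreducible (p : O))
    (K₁ K₂ : Ideal SS)
    (hK₁ : K₁ = Ideal.span
      {α₀, α₁ + pp, β₀, β₁ + pp * β₂, γ₀, γ₁ + pp * γ₂, δ₀, δ₁ + pp,
       β₂ * γ₂ + pp})
    (hK₂ : K₂ = Ideal.span
      {α₀ - pp ^ 2, α₁ + 2 * pp, γ₀ - pp ^ 2 * γ₂, γ₁ + 2 * pp * γ₂,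
       γ₂ * β₂ - δ₁ + pp,
       CC (κ - 1) * β₁ + 2 * pp * β₂,
       pp * β₁ + CC κ * β₀,
       CC (κ - 2) * δ₁ + 2 * pp,
       CC (κ - 1) * δ₀ + pp * δ₁}) :
    K₁ ⊔ K₂ = K₁ ⊔ Ideal.span {pp} := by
  subst hK₁ hK₂
  apply le_antisymm
  · refine sup_le le_sup_left (Ideal.span_le.2 ?_)
    set I := Ideal.span
      ({α₀, α₁ + pp, β₀, β₁ + pp * β₂, γ₀, γ₁ + pp * γ₂, δ₀, δ₁ + pp,
       β₂ * γ₂ + pp} : Set SS) ⊔ Ideal.span {pp} with hI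
    have hP : pp ∈ I := Ideal.mem_sup_right (Ideal.subset_span (by simp))
    have g1 : α₀ ∈ I := Ideal.mem_sup_left (Ideal.subset_span (by simp))
    have g2 : α₁ + pp ∈ I := Ideal.mem_sup_left (Ideal.subset_span (by simp))
    have g3 : β₀ ∈ I := Ideal.mem_sup_left (Ideal.subset_span (by simp))
    have g4 : β₁ + pp * β₂ ∈ I := Ideal.mem_sup_left (Ideal.subset_span (by simp))
    have g5 : γ₀ ∈ I := Ideal.mem_sup_left (Ideal.subset_span (by simp))
    have g6 : γ₁ + pp * γ₂ ∈ I := Ideal.mem_sup_left (Ideal.subset_span (by simp))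
    have g7 : δ₀ ∈ I := Ideal.mem_sup_left (Ideal.subset_span (by simp))
    have g8 : δ₁ + pp ∈ I := Ideal.mem_sup_left (Ideal.subset_span (by simp))
    have g9 : β₂ * γ₂ + pp ∈ I := Ideal.mem_sup_left (Ideal.subset_span (by simp))
    intro x hx
    simp only [Set.mem_insert_iff, Set.mem_singleton_iff] at hx
    rcases hx with h|h|h|h|h|h|h|h|h <;> subst h
    · have e : α₀ - pp ^ 2 = α₀ - pp * pp := by ring
      rw [e]; exact I.sub_mem g1 (I.mul_mem_left _ hP)
    · have e : α₁ + 2 * pp = (α₁ + pp) + 1 * pp := by ring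
      rw [e]; exact I.add_mem g2 (I.mul_mem_left _ hP)
    · have e : γ₀ - pp ^ 2 * γ₂ = γ₀ - (pp * γ₂) * pp := by ring
      rw [e]; exact I.sub_mem g5 (I.mul_mem_left _ hP)
    · have e : γ₁ + 2 * pp * γ₂ = (γ₁ + pp * γ₂) + γ₂ * pp := by ring
      rw [e]; exact I.add_mem g6 (I.mul_mem_left _ hP)
    · have e : γ₂ * β₂ - δ₁ + pp = (β₂ * γ₂ + pp) - (δ₁ + pp) + 1 * pp := by ring
      rw [e]; exact I.add_mem (I.sub_mem g9 g8) (I.mul_mem_left _ hP)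
    · have e : CC (κ - 1) * β₁ + 2 * pp * β₂
          = CC (κ - 1) * (β₁ + pp * β₂) + ((2 - CC (κ - 1)) * β₂) * pp := by ring
      rw [e]; exact I.add_mem (I.mul_mem_left _ g4) (I.mul_mem_left _ hP)
    · have e : pp * β₁ + CC κ * β₀ = CC κ * β₀ + β₁ * pp := by ring
      rw [e]; exact I.add_mem (I.mul_mem_left _ g3) (I.mul_mem_left _ hP)
    · have e : CC (κ - 2) * δ₁ + 2 * pp
          = CC (κ - 2) * (δ₁ + pp) + (2 - CC (κ - 2)) * pp := by ring
      rw [e]; exact I.add_mem (I.mul_mem_left _ g8) (I.mul_mem_left _ hP)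
    · have e : CC (κ - 1) * δ₀ + pp * δ₁ = CC (κ - 1) * δ₀ + δ₁ * pp := by ring
      rw [e]; exact I.add_mem (I.mul_mem_left _ g7) (I.mul_mem_left _ hP)
  · refine sup_le le_sup_left (Ideal.span_le.2 ?_)
    intro x hx
    simp only [Set.mem_singleton_iff] at hx
    subst hx
    have h1 : α₁ + pp ∈ Ideal.span
        ({α₀, α₁ + pp, β₀, β₁ + pp * β₂, γ₀, γ₁ + pp * γ₂, δ₀, δ₁ + pp,
         β₂ * γ₂ + pp} : Set SS) := Ideal.subset_span (by simp)
    have h2 : α₁ + 2 * pp ∈ Ideal.span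
        ({α₀ - pp ^ 2, α₁ + 2 * pp, γ₀ - pp ^ 2 * γ₂, γ₁ + 2 * pp * γ₂,
         γ₂ * β₂ - δ₁ + pp,
         CC (κ - 1) * β₁ + 2 * pp * β₂,
         pp * β₁ + CC κ * β₀,
         CC (κ - 2) * δ₁ + 2 * pp,
         CC (κ - 1) * δ₀ + pp * δ₁} : Set SS) := Ideal.subset_span (by simp)
    have key := sub_mem (Ideal.mem_sup_right h2) (Ideal.mem_sup_left h1)
    have e : (α₁ + 2 * pp) - (α₁ + pp) = pp := by ring
    rwa [e] at key

end ArmCyclicity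
end
end
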